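/- Consider an LQ network game satisfying the contraction assumption and let a^α := (I − (γ/2)(G + Gᵀ))^{-1} β. Then SW(a^α) = (1/2)‖a^α‖₂² and SW(a^α) ≥ ‖β‖₂² / (2 · (1 − λ_min(γ(G + Gᵀ))/2)²). -/

import Mathlib

open Matrix

/-- In an LQ network game satisfying the contraction assumption, with
`a^α := (I − (γ/2)(G + Gᵀ))⁻¹ β`, one has `SW(a^α) = (1/2)‖a^α‖₂²` and
`SW(a^α) ≥ ‖β‖₂² / (2·(1 − λ_min(γ(G + Gᵀ))/2)²)`. -/
theorem alpha_potential_maximizer_welfare_lower_bound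
    {N : ℕ} (hN : 0 < N)
    (G : Matrix (Fin N) (Fin N) ℝ)
    (hdiag : ∀ i, G i i = 0)
    (hGsmall : ∀ i j, |G i j| ≤ 1 / (N : ℝ))
    (γ : ℝ) (hγ : |γ| < 1 / 2)
    (β : Fin N → ℝ)
    (lo hi : Fin N → ℝ) (hlohi : ∀ i, lo i ≤ hi i)
    (A : Set (Fin N → ℝ)) (hA : A = Set.univ.pi fun i => Set.Icc (lo i) (hi i))
    (atil : ℝ) (hatil : 0 ≤ atil)
    (hsub : ∀ i, Set.Icc (-atil) atil ⊆ Set.Icc (lo i) (hi i))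
    (hβ : ∀ i, |β i| ≤ (1 - 2 * |γ|) * atil)
    (u : Fin N → (Fin N → ℝ) → ℝ)
    (hu : ∀ i a, u i a = -(1/2) * a i ^ 2 + β i * a i + γ * (∑ j, G i j * a j) * a i)
    (SW : (Fin N → ℝ) → ℝ) (hSW : ∀ a, SW a = ∑ i, u i a)
    (aα : Fin N → ℝ) (haα : aα = (1 - (γ / 2) • (G + Gᵀ))⁻¹ *ᵥ β)
    (hS : (γ • (G + Gᵀ)).IsHermitian) :
    SW aα = 1 / 2 * ∑ i, aα i ^ 2 ∧
    (∑ i, β i ^ 2) / (2 * (1 - (⨅ i, hS.eigenvalues i) / 2) ^ 2) ≤ SW aα := by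
  have : Nonempty (Fin N) := ⟨⟨0, hN⟩⟩
  have hNpos : (0:ℝ) < N := by exact_mod_cast hN
  set M : Matrix (Fin N) (Fin N) ℝ := 1 - (γ / 2) • (G + Gᵀ) with hMdef
  -- quadratic form bound
  have quad : ∀ x : Fin N → ℝ, |x ⬝ᵥ ((G + Gᵀ) *ᵥ x)| ≤ 2 * ∑ i, x i ^ 2 := by
    intro x
    have hent : ∀ i j : Fin N, |G i j + G j i| ≤ 2 / N := by
      intro i j
      calc |G i j + G j i| ≤ |G i j| + |G j i| := abs_add_le _ _
        _ ≤ 1/N + 1/N := add_le_add (hGsmall i j) (hGsmall j i)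
        _ = 2/N := by ring
    have e1 : x ⬝ᵥ ((G + Gᵀ) *ᵥ x) = ∑ i, ∑ j, x i * ((G i j + G j i) * x j) := by
      simp [dotProduct, mulVec, Matrix.add_apply, transpose_apply, Finset.mul_sum]
    calc |x ⬝ᵥ ((G + Gᵀ) *ᵥ x)| = |∑ i, ∑ j, x i * ((G i j + G j i) * x j)| := by rw [e1]
      _ ≤ ∑ i, |∑ j, x i * ((G i j + G j i) * x j)| := Finset.abs_sum_le_sum_abs _ _
      _ ≤ ∑ i : Fin N, ∑ j, |x i| * ((2/N) * |x j|) := by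
          refine Finset.sum_le_sum fun i _ => ?_
          refine le_trans (Finset.abs_sum_le_sum_abs _ _) (Finset.sum_le_sum fun j _ => ?_)
          rw [abs_mul, abs_mul]
          exact mul_le_mul_of_nonneg_left
            (mul_le_mul_of_nonneg_right (hent i j) (abs_nonneg _)) (abs_nonneg _)
      _ = (2/N) * (∑ i, |x i|) ^ 2 := by
          rw [sq, Finset.sum_mul_sum, Finset.mul_sum]
          refine Finset.sum_congr rfl fun i _ => ?_
          rw [Finset.mul_sum]
          exact Finset.sum_congr rfl fun j _ => by ring
      _ ≤ (2/N) * ((N : ℝ) * ∑ i, |x i| ^ 2) := by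
          gcongr
          have := sq_sum_le_card_mul_sum_sq (s := (Finset.univ : Finset (Fin N)))
            (f := fun i => |x i|)
          simpa using this
      _ = 2 * ∑ i, x i ^ 2 := by
          rw [show (∑ i, |x i| ^ 2) = ∑ i, x i ^ 2 from Finset.sum_congr rfl fun i _ => sq_abs _]
          field_simp
  -- M is positive definite, hence invertible
  have hMherm : M.IsHermitian := by
    show Mᴴ = M
    rw [hMdef, conjTranspose_eq_transpose_of_trivial, transpose_sub, transpose_one,
      transpose_smul, transpose_add, transpose_transpose, add_comm]
  have hPD : M.PosDef := by
    refine Matrix.PosDef.of_dotProduct_mulVec_pos hMherm fun x hx => ?_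
    have hx2 : 0 < ∑ i, x i ^ 2 := by
      have h1 : ∃ i, x i ≠ 0 := by
        by_contra h
        push_neg at h
        exact hx (funext h)
      obtain ⟨i, hi⟩ := h1
      exact Finset.sum_pos' (fun j _ => sq_nonneg _) ⟨i, Finset.mem_univ i, by positivity⟩
    have e : star x ⬝ᵥ (M *ᵥ x) = (∑ i, x i ^ 2) - (γ/2) * (x ⬝ᵥ ((G + Gᵀ) *ᵥ x)) := by
      rw [hMdef, sub_mulVec, one_mulVec, smul_mulVec]
      rw [show star x = x from rfl]
      rw [dotProduct_sub, dotProduct_smul]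
      simp [dotProduct, sq]
    rw [e]
    have h2 : (γ/2) * (x ⬝ᵥ ((G + Gᵀ) *ᵥ x)) ≤ |γ/2| * |x ⬝ᵥ ((G + Gᵀ) *ᵥ x)| := by
      rw [← abs_mul]; exact le_abs_self _
    have h3 : |γ/2| * |x ⬝ᵥ ((G + Gᵀ) *ᵥ x)| ≤ (|γ|/2) * (2 * ∑ i, x i ^ 2) := by
      rw [abs_div, abs_two]
      exact mul_le_mul_of_nonneg_left (quad x) (by positivity)
    nlinarith [abs_nonneg γ]
  have hdet : IsUnit M.det := hPD.det_pos.ne'.isUnit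
  have hMa : M *ᵥ aα = β := by
    rw [haα, mulVec_mulVec, Matrix.mul_nonsing_inv _ hdet, one_mulVec]
  -- Part 1
  have key : ∀ i, β i = aα i - γ/2 * ∑ j, (G i j + G j i) * aα j := by
    intro i
    rw [← hMa, hMdef, sub_mulVec, one_mulVec, smul_mulVec]
    simp [mulVec, dotProduct, Matrix.add_apply, transpose_apply]
  have term : ∀ i, u i aα = 1/2 * aα i ^ 2 +
      γ/2 * ((∑ j, G i j * (aα j * aα i)) - ∑ j, G j i * (aα j * aα i)) := by
    intro i
    rw [hu, key i]
    have h1 : (∑ j, (G i j + G j i) * aα j)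
        = (∑ j, G i j * aα j) + ∑ j, G j i * aα j := by
      rw [← Finset.sum_add_distrib]
      exact Finset.sum_congr rfl fun j _ => by ring
    have h2 : (∑ j, G i j * (aα j * aα i)) = (∑ j, G i j * aα j) * aα i := by
      rw [Finset.sum_mul]; exact Finset.sum_congr rfl fun j _ => by ring
    have h3 : (∑ j, G j i * (aα j * aα i)) = (∑ j, G j i * aα j) * aα i := by
      rw [Finset.sum_mul]; exact Finset.sum_congr rfl fun j _ => by ring
    rw [h1, h2, h3]
    ring
  have swap : ∑ i, ∑ j, G j i * (aα j * aα i) = ∑ i, ∑ j, G i j * (aα j * aα i) := by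
    rw [Finset.sum_comm]
    exact Finset.sum_congr rfl fun i _ => Finset.sum_congr rfl fun j _ => by ring
  have part1 : SW aα = 1/2 * ∑ i, aα i ^ 2 := by
    rw [hSW]
    rw [Finset.sum_congr rfl fun i _ => term i]
    rw [Finset.sum_add_distrib]
    have e2 : ∑ i, γ/2 * ((∑ j, G i j * (aα j * aα i)) - ∑ j, G j i * (aα j * aα i)) = 0 := by
      rw [← Finset.mul_sum, Finset.sum_sub_distrib, swap, sub_self, mul_zero]
    rw [e2, add_zero, ← Finset.mul_sum]
  refine ⟨part1, ?_⟩
  -- Part 2: spectral analysis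
  set U : Matrix (Fin N) (Fin N) ℝ := (hS.eigenvectorUnitary : Matrix (Fin N) (Fin N) ℝ)
    with hUdef
  have hUmem : (hS.eigenvectorUnitary : Matrix (Fin N) (Fin N) ℝ) ∈
      Matrix.unitaryGroup (Fin N) ℝ := hS.eigenvectorUnitary.2
  have hU1 : U * star U = 1 := (mem_unitaryGroup_iff).mp hUmem
  have hU2 : star U * U = 1 := (mem_unitaryGroup_iff').mp hUmem
  have hstarU : star U = Uᵀ := by
    rw [Matrix.star_eq_conjTranspose, conjTranspose_eq_transpose_of_trivial]
  have hSU : (γ • (G + Gᵀ)) * U = U * diagonal hS.eigenvalues := by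
    conv_lhs => rw [hS.spectral_theorem, Unitary.conjStarAlgAut_apply]
    rw [mul_assoc (U * diagonal _), hU2, mul_one]
    rfl
  have pars : ∀ y : Fin N → ℝ, ∑ i, (U *ᵥ y) i ^ 2 = ∑ i, y i ^ 2 := by
    intro y
    have h1 : (U *ᵥ y) ⬝ᵥ (U *ᵥ y) = y ⬝ᵥ y := by
      rw [dotProduct_mulVec, ← mulVec_transpose, mulVec_mulVec, ← hstarU, hU2, one_mulVec]
    simp only [dotProduct] at h1
    simpa [sq] using h1
  set c : Fin N → ℝ := star U *ᵥ aα with hc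
  have hUc : U *ᵥ c = aα := by rw [hc, mulVec_mulVec, hU1, one_mulVec]
  have hsum_a : ∑ i, aα i ^ 2 = ∑ i, c i ^ 2 := by
    have := pars c; rw [hUc] at this; exact this
  set d : Fin N → ℝ := fun i => (1 - hS.eigenvalues i / 2) * c i with hd
  have hMU : M * U = U * diagonal (fun i => 1 - hS.eigenvalues i / 2) := by
    have hM2 : M = 1 - (2⁻¹ : ℝ) • (γ • (G + Gᵀ)) := by
      have h : (2⁻¹ : ℝ) * γ = γ / 2 := by ring
      rw [hMdef, smul_smul, h]
    rw [hM2, sub_mul, one_mul, Matrix.smul_mul, hSU]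
    rw [show U - (2⁻¹ : ℝ) • (U * diagonal hS.eigenvalues)
        = U * (1 - (2⁻¹ : ℝ) • diagonal hS.eigenvalues) by
      rw [mul_sub, mul_one, Matrix.mul_smul]]
    have hdiagid : (1 : Matrix (Fin N) (Fin N) ℝ) - (2⁻¹ : ℝ) • diagonal hS.eigenvalues
        = diagonal (fun i => 1 - hS.eigenvalues i / 2) := by
      ext i j
      by_cases h : i = j
      · subst h
        simp [Matrix.one_apply, Matrix.diagonal_apply]
        ring
      · simp [Matrix.one_apply, h, Matrix.diagonal_apply]
    rw [hdiagid]
  have hβd : β = U *ᵥ d := by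
    have hdc : (diagonal fun i => 1 - hS.eigenvalues i / 2) *ᵥ c = d := by
      funext i
      rw [mulVec_diagonal]
    rw [← hMa, ← hUc, mulVec_mulVec, hMU, ← mulVec_mulVec, hdc]
  have hsum_b : ∑ i, β i ^ 2 = ∑ i, d i ^ 2 := by
    have := pars d; rw [← hβd] at this; exact this
  -- eigenvalue bounds
  have hev : ∀ i, |hS.eigenvalues i| ≤ 2 * |γ| := by
    intro i
    have h0 := hS.eigenvalues_eq i
    set v : Fin N → ℝ := ⇑(hS.eigenvectorBasis i) with hv
    have hnorm : ∑ k, v k * v k = 1 := by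
      have horth := hS.eigenvectorBasis.orthonormal
      rw [orthonormal_iff_ite] at horth
      have h := horth i i
      simp only [if_pos rfl] at h
      rw [PiLp.inner_apply] at h
      simpa [hv, ← sq] using h
    have h1 : hS.eigenvalues i = γ * (v ⬝ᵥ ((G + Gᵀ) *ᵥ v)) := by
      rw [h0]
      simp only [star_trivial, RCLike.re_to_real, smul_mulVec, dotProduct_smul,
        smul_eq_mul, hv]
    rw [h1, abs_mul]
    calc |γ| * |v ⬝ᵥ ((G + Gᵀ) *ᵥ v)| ≤ |γ| * (2 * ∑ k, v k ^ 2) :=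
        mul_le_mul_of_nonneg_left (quad v) (abs_nonneg γ)
      _ = 2 * |γ| := by
          rw [show (∑ k, v k ^ 2) = 1 by
            rw [← hnorm]; exact Finset.sum_congr rfl fun k _ => sq (v k) ▸ (sq (v k)).symm ▸ rfl]
          ring
  obtain ⟨i0, hi0⟩ := exists_eq_ciInf_of_finite (f := hS.eigenvalues)
  set m := ⨅ i, hS.eigenvalues i with hm
  have hbdd : BddBelow (Set.range hS.eigenvalues) := (Set.finite_range _).bddBelow
  have hmle : ∀ i, m ≤ hS.eigenvalues i := fun i => ciInf_le hbdd i
  have hγ1 : 2 * |γ| < 1 := by linarith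
  have hmlb : -1 < m := by
    rw [← hi0]
    have := (abs_le.mp (hev i0)).1
    linarith
  have hmub : m < 1 := by
    rw [← hi0]
    have := (abs_le.mp (hev i0)).2
    linarith
  have hpos : 0 < 1 - m / 2 := by linarith
  have hfac : ∀ i, (1 - hS.eigenvalues i / 2) ^ 2 ≤ (1 - m / 2) ^ 2 := by
    intro i
    have h1 : 0 ≤ 1 - hS.eigenvalues i / 2 := by
      have := (abs_le.mp (hev i)).2; linarith
    have h2 : 1 - hS.eigenvalues i / 2 ≤ 1 - m / 2 := by linarith [hmle i]
    exact pow_le_pow_left₀ h1 h2 2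
  have hineq : ∑ i, β i ^ 2 ≤ (1 - m / 2) ^ 2 * ∑ i, aα i ^ 2 := by
    rw [hsum_b, hsum_a, Finset.mul_sum]
    refine Finset.sum_le_sum fun i _ => ?_
    calc d i ^ 2 = (1 - hS.eigenvalues i / 2) ^ 2 * c i ^ 2 := by rw [hd]; ring
      _ ≤ (1 - m / 2) ^ 2 * c i ^ 2 :=
        mul_le_mul_of_nonneg_right (hfac i) (sq_nonneg _)
  rw [part1, div_le_iff₀ (by positivity)]
  calc ∑ i, β i ^ 2 ≤ (1 - m / 2) ^ 2 * ∑ i, aα i ^ 2 := hineq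
    _ = 1 / 2 * (∑ i, aα i ^ 2) * (2 * (1 - m / 2) ^ 2) := by ring
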